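/- For all real numbers x and y with x ≠ 0, the identity |x − y| − |x| = −y·sgn(x) + 2∫₀^y (1(x ≤ s) − 1(x ≤ 0)) ds holds, where sgn(x) = 1(x > 0) − 1(x < 0) and the integral is the signed (oriented) Lebesgue integral from 0 to y. -/

import Mathlib

noncomputable def sgn (x : ℝ) : ℝ := if x > 0 then 1 else if x < 0 then -1 else 0

open MeasureTheory

lemma aux_ioc (x a b : ℝ) (hab : a ≤ b) :
    ∫ s in Set.Ioc a b, (if x ≤ s then (1:ℝ) else 0) = max b x - max a x := by
  have h1 : (fun s => if x ≤ s then (1:ℝ) else 0) =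
      Set.indicator (Set.Ici x) (fun _ => (1:ℝ)) := by
    ext s; simp [Set.indicator_apply, Set.mem_Ici]
  rw [h1, setIntegral_indicator measurableSet_Ici, setIntegral_const]
  have hvol : volume (Set.Ioc a b ∩ Set.Ici x) = ENNReal.ofReal (b - max a x) := by
    apply le_antisymm
    · have : Set.Ioc a b ∩ Set.Ici x ⊆ Set.Icc (max a x) b := by
        rintro s ⟨⟨h1, h2⟩, h3⟩
        exact ⟨max_le (le_of_lt h1) h3, h2⟩
      calc volume (Set.Ioc a b ∩ Set.Ici x) ≤ volume (Set.Icc (max a x) b) :=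
            measure_mono this
        _ = ENNReal.ofReal (b - max a x) := Real.volume_Icc
    · have : Set.Ioc (max a x) b ⊆ Set.Ioc a b ∩ Set.Ici x := by
        rintro s ⟨h1, h2⟩
        exact ⟨⟨lt_of_le_of_lt (le_max_left a x) h1, h2⟩,
          le_of_lt (lt_of_le_of_lt (le_max_right a x) h1)⟩
      calc ENNReal.ofReal (b - max a x) = volume (Set.Ioc (max a x) b) :=
            Real.volume_Ioc.symm
        _ ≤ volume (Set.Ioc a b ∩ Set.Ici x) := measure_mono this
  rw [measureReal_def, hvol]
  rw [ENNReal.toReal_ofReal']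
  rcases le_total x b with h | h
  · rw [max_eq_left h]
    have : max a x ≤ b := max_le hab h
    rw [max_eq_left (by linarith)]
    simp
  · rw [max_eq_right h, max_eq_right (hab.trans h)]
    rw [max_eq_right (by linarith)]
    simp

lemma integral_step (x y : ℝ) :
    ∫ s in (0:ℝ)..y, (if x ≤ s then (1:ℝ) else 0) = max y x - max 0 x := by
  rcases le_total 0 y with h | h
  · rw [intervalIntegral.integral_of_le h, aux_ioc x 0 y h]
  · rw [intervalIntegral.integral_symm, intervalIntegral.integral_of_le h,
      aux_ioc x y 0 h]
    ring

theorem knight_identity (x y : ℝ) (hx : x ≠ 0) :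
    |x - y| - |x| =
      -y * sgn x +
        2 * ∫ s in (0:ℝ)..y,
          ((if x ≤ s then (1:ℝ) else 0) - (if x ≤ 0 then (1:ℝ) else 0)) := by
  have hint1 : IntervalIntegrable (fun s => if x ≤ s then (1:ℝ) else 0) volume 0 y := by
    apply Monotone.intervalIntegrable
    intro a b hab
    dsimp only
    split_ifs with h1 h2 <;> try norm_num
    exact absurd (h1.trans hab) h2
  have hint2 : IntervalIntegrable (fun _ : ℝ => if x ≤ 0 then (1:ℝ) else 0) volume 0 y :=
    intervalIntegrable_const
  rw [intervalIntegral.integral_sub hint1 hint2, integral_step,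
    intervalIntegral.integral_const]
  rcases hx.lt_or_gt with h | h
  · have hs : sgn x = -1 := by simp [sgn, h, not_lt.mpr h.le]
    rw [hs, max_eq_left h.le, if_pos h.le, abs_of_nonpos h.le]
    rcases le_total x y with h2 | h2
    · rw [max_eq_left h2, abs_of_nonpos (by linarith)]
      simp only [smul_eq_mul]; ring
    · rw [max_eq_right h2, abs_of_nonneg (by linarith)]
      simp only [smul_eq_mul]; ring
  · have hs : sgn x = 1 := by simp [sgn, h]
    rw [hs, max_eq_right h.le, if_neg (not_le.mpr h), abs_of_nonneg h.le]
    rcases le_total x y with h2 | h2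
    · rw [max_eq_left h2, abs_of_nonpos (by linarith)]
      simp only [smul_eq_mul]; ring
    · rw [max_eq_right h2, abs_of_nonneg (by linarith)]
      simp only [smul_eq_mul]; ring
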